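/- Let p be a positive natural number, let μ ∈ ℝ^p, and let Σ be a real symmetric positive definite p×p matrix. If X is an ℝ^p-valued random vector distributed according to the multivariate Gaussian distribution N(μ, Σ), then the Mahalanobis distance statistic d = (X − μ)ᵀ Σ⁻¹ (X − μ) is chi-squared distributed with p degrees of freedom; that is, the law of d is the Gamma distribution with shape parameter p/2 and rate parameter 1/2. -/

import Mathlib

open MeasureTheory ProbabilityTheory Matrix
open scoped ENNReal NNReal
open scoped MatrixOrder

/-- The multivariate Gaussian distribution `N(μ, Σ)` on `ℝ^p`, given by its density with
respect to Lebesgue measure. -/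
noncomputable def mvGaussian {p : ℕ} (μ : Fin p → ℝ) (S : Matrix (Fin p) (Fin p) ℝ) :
    Measure (Fin p → ℝ) :=
  volume.withDensity fun x =>
    ENNReal.ofReal ((2 * Real.pi) ^ (-(p : ℝ) / 2) * S.det ^ (-(1 : ℝ) / 2) *
      Real.exp (-(1 / 2) * ((x - μ) ⬝ᵥ S⁻¹.mulVec (x - μ))))

section Aux

open Set Metric Real
open scoped ENNReal NNReal

/-- 1D change-of-variables formula for Lebesgue (lower) integrals. -/
theorem mahalanobis_aux_lintegral_image {s : Set ℝ} {f f' : ℝ → ℝ}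
    (hs : MeasurableSet s) (hf' : ∀ x ∈ s, HasDerivWithinAt f (f' x) s x)
    (hf : Set.InjOn f s) (g : ℝ → ℝ≥0∞) :
    ∫⁻ x in f '' s, g x = ∫⁻ x in s, ENNReal.ofReal |f' x| * g (f x) := by
  simpa only [ContinuousLinearMap.det_toSpanSingleton] using
    lintegral_image_eq_lintegral_abs_det_fderiv_mul volume hs
      (fun x hx => (hf' x hx).hasFDerivWithinAt) hf g

/-- Polar-coordinates representation of a lower integral of a function of the norm. -/
theorem mahalanobis_aux_lintegral_norm {E : Type*} [NormedAddCommGroup E] [NormedSpace ℝ E]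
    [MeasurableSpace E] [BorelSpace E] [FiniteDimensional ℝ E] [Nontrivial E]
    (μ : Measure E) [μ.IsAddHaarMeasure] (f : ℝ → ℝ≥0∞) (hf : Measurable f) :
    ∫⁻ x, f ‖x‖ ∂μ = μ.toSphere univ *
      ∫⁻ r in Ioi (0 : ℝ), ENNReal.ofReal (r ^ (Module.finrank ℝ E - 1)) * f r :=
  calc ∫⁻ x, f ‖x‖ ∂μ
      = ∫⁻ x : ({(0 : E)}ᶜ : Set E), (fun y : E => f ‖y‖) ↑x ∂(μ.comap Subtype.val) := by
        rw [lintegral_subtype_comap (measurableSet_singleton _).compl (fun y : E => f ‖y‖),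
          MeasureTheory.restrict_compl_singleton]
    _ = ∫⁻ z : sphere (0:E) 1 × Ioi (0:ℝ), f z.2
          ∂(μ.toSphere.prod (.volumeIoiPow (Module.finrank ℝ E - 1))) := by
        simpa only [homeomorphUnitSphereProd_apply_snd_coe] using
        (μ.measurePreserving_homeomorphUnitSphereProd).lintegral_comp_emb
          (Homeomorph.measurableEmbedding _) (fun z => f z.2)
    _ = μ.toSphere univ *
          ∫⁻ r : Ioi (0:ℝ), f r ∂(Measure.volumeIoiPow (Module.finrank ℝ E - 1)) := by
        rw [MeasureTheory.lintegral_prod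
          (fun z : ↥(sphere (0:E) 1) × ↥(Ioi (0:ℝ)) => f ↑z.2) (by fun_prop)]
        simp [lintegral_const, mul_comm]
    _ = μ.toSphere univ *
          ∫⁻ r in Ioi (0 : ℝ), ENNReal.ofReal (r ^ (Module.finrank ℝ E - 1)) * f r := by
        congr 1
        rw [Measure.volumeIoiPow,
          lintegral_withDensity_eq_lintegral_mul (g := fun r : Ioi (0:ℝ) => f ↑r) _
            ((measurable_subtype_coe.pow_const _).ennreal_ofReal) (by fun_prop),
          ← lintegral_subtype_comap measurableSet_Ioi
            (fun r : ℝ => ENNReal.ofReal (r ^ (Module.finrank ℝ E - 1)) * f r)]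
        rfl

theorem mahalanobis_aux_measurable_dot {p : ℕ} : Measurable fun y : Fin p → ℝ => y ⬝ᵥ y := by
  simp only [dotProduct]
  exact Finset.measurable_sum _ fun i _ => (measurable_pi_apply i).mul (measurable_pi_apply i)

/-- The lower integral over `ℝ^p` of a function of `y ⬝ᵥ y`, in polar coordinates. -/
theorem mahalanobis_aux_lintegral_dot {p : ℕ} (hp : 0 < p) (g : ℝ → ℝ≥0∞) (hg : Measurable g) :
    ∫⁻ y : Fin p → ℝ, g (y ⬝ᵥ y) =
      ((p : ℝ≥0∞) * volume (ball (0 : EuclideanSpace ℝ (Fin p)) 1)) *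
        ∫⁻ r in Ioi (0 : ℝ), ENNReal.ofReal (r ^ (p - 1)) * g (r ^ 2) := by
  haveI : Nonempty (Fin p) := ⟨⟨0, hp⟩⟩
  haveI : Nontrivial (EuclideanSpace ℝ (Fin p)) := inferInstance
  have hGm : Measurable fun y : Fin p → ℝ => g (y ⬝ᵥ y) := hg.comp mahalanobis_aux_measurable_dot
  rw [← (EuclideanSpace.volume_preserving_symm_measurableEquiv_toLp (Fin p)).lintegral_comp hGm]
  have h1 : ∀ x : EuclideanSpace ℝ (Fin p),
      g ((MeasurableEquiv.toLp 2 (Fin p → ℝ)).symm x ⬝ᵥ (MeasurableEquiv.toLp 2 (Fin p → ℝ)).symm x)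
        = (fun r : ℝ => g (r ^ 2)) ‖x‖ := by
    intro x
    congr 1
    have : ‖x‖ ^ 2 = ∑ i, x i ^ 2 := by
      rw [EuclideanSpace.norm_eq, Real.sq_sqrt (by positivity)]
      simp [Real.norm_eq_abs, sq_abs]
    rw [this]
    simp [dotProduct, sq]
  calc ∫⁻ x : EuclideanSpace ℝ (Fin p),
        g ((MeasurableEquiv.toLp 2 (Fin p → ℝ)).symm x ⬝ᵥ (MeasurableEquiv.toLp 2 (Fin p → ℝ)).symm x)
      = ∫⁻ x : EuclideanSpace ℝ (Fin p), (fun r : ℝ => g (r ^ 2)) ‖x‖ :=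
        lintegral_congr fun x => by rw [h1 x]
    _ = _ := by
        rw [mahalanobis_aux_lintegral_norm volume (fun r : ℝ => g (r ^ 2))
            (hg.comp (measurable_id.pow_const 2)),
          Measure.toSphere_apply_univ, finrank_euclideanSpace_fin]

/-- Substitution `t = r ^ 2` in a radial lower integral. -/
theorem mahalanobis_aux_subst {p : ℕ} (hp : 0 < p) (g : ℝ → ℝ≥0∞) :
    ∫⁻ r in Ioi (0 : ℝ), ENNReal.ofReal (r ^ (p - 1)) * g (r ^ 2)
      = ∫⁻ t in Ioi (0 : ℝ), ENNReal.ofReal (t ^ ((p : ℝ) / 2 - 1) / 2) * g t := by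
  have himg : (fun x : ℝ => x ^ 2) '' Ioi 0 = Ioi 0 := by
    ext t
    simp only [Set.mem_image, mem_Ioi]
    constructor
    · rintro ⟨x, hx, rfl⟩; positivity
    · intro ht; exact ⟨Real.sqrt t, Real.sqrt_pos.2 ht, Real.sq_sqrt ht.le⟩
  have key := mahalanobis_aux_lintegral_image (s := Ioi (0:ℝ)) (f := fun x : ℝ => x ^ 2)
    (f' := fun x : ℝ => 2 * x) measurableSet_Ioi
    (fun x _ => by simpa using (hasDerivAt_pow 2 x).hasDerivWithinAt)
    (fun a ha b hb h => by
      simp only [mem_Ioi] at ha hb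
      have h' : a ^ 2 = b ^ 2 := h
      exact le_antisymm (by nlinarith) (by nlinarith))
    (fun t => ENNReal.ofReal (t ^ ((p : ℝ) / 2 - 1) / 2) * g t)
  rw [himg] at key
  rw [key]
  refine setLIntegral_congr_fun measurableSet_Ioi (fun x hx => ?_)
  simp only [mem_Ioi] at hx
  rw [← mul_assoc, ← ENNReal.ofReal_mul (by positivity)]
  congr 2
  have h2 : ((x ^ 2 : ℝ)) ^ ((p : ℝ) / 2 - 1) = x ^ ((p : ℝ) - 2) := by
    rw [← Real.rpow_natCast x 2, ← Real.rpow_mul hx.le]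
    congr 1
    push_cast
    ring
  rw [h2, abs_of_pos (by positivity)]
  rw [← Real.rpow_natCast x (p - 1), Nat.cast_sub hp, Nat.cast_one]
  rw [show (2 : ℝ) * x * (x ^ ((p : ℝ) - 2) / 2) = x ^ (1 : ℝ) * x ^ ((p : ℝ) - 2) by
    rw [Real.rpow_one]; ring]
  rw [← Real.rpow_add hx]
  congr 1
  ring

theorem mahalanobis_aux_measurable_mulVec {p : ℕ} (T : Matrix (Fin p) (Fin p) ℝ) :
    Measurable (T.mulVec) := by
  have h : ∀ i, Measurable fun v : Fin p → ℝ => ∑ j, T i j * v j := fun i =>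
    Finset.measurable_sum _ fun j _ => (measurable_pi_apply j).const_mul _
  exact measurable_pi_lambda _ fun i => h i

/-- The pushforward of Lebesgue measure under an invertible affine map. -/
theorem mahalanobis_aux_map_affine {p : ℕ} (μ : Fin p → ℝ) (T : Matrix (Fin p) (Fin p) ℝ)
    (hTdet0 : T.det ≠ 0) :
    Measure.map (fun y : Fin p → ℝ => μ + T.mulVec y) volume
      = ENNReal.ofReal |T.det⁻¹| • volume := by
  have h1 : Measure.map (T.mulVec) volume = ENNReal.ofReal |T.det⁻¹| • volume := by
    have h := Real.map_matrix_volume_pi_eq_smul_volume_pi hTdet0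
    rwa [show ⇑(toLin' T) = T.mulVec from funext fun v => toLin'_apply T v] at h
  have h2 : (fun y : Fin p → ℝ => μ + T.mulVec y) = (fun x => μ + x) ∘ T.mulVec := rfl
  rw [h2, ← Measure.map_map (f := T.mulVec) (g := fun x => μ + x) (by fun_prop)
      (mahalanobis_aux_measurable_mulVec T), h1,
    Measure.map_smul, map_add_left_eq_self volume μ]

/-- The gamma measure of a set, as an integral over `(0, ∞)` against an indicator. -/
theorem mahalanobis_aux_gammaMeasure_apply {a r : ℝ} {s : Set ℝ} (hs : MeasurableSet s) :
    gammaMeasure a r s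
      = ∫⁻ t in Ioi (0:ℝ), s.indicator (fun _ => (1:ℝ≥0∞)) t * gammaPDF a r t := by
  rw [gammaMeasure, withDensity_apply _ hs]
  have h1 : ∫⁻ t in Ioi (0:ℝ), s.indicator (fun _ => (1:ℝ≥0∞)) t * gammaPDF a r t
      = ∫⁻ t in Ioi (0:ℝ), s.indicator (gammaPDF a r) t := by
    refine setLIntegral_congr_fun measurableSet_Ioi (fun t _ => ?_)
    by_cases hts : t ∈ s <;> simp [Set.indicator, hts]
  rw [h1, lintegral_indicator hs, Measure.restrict_restrict hs]
  have h2 : ∫⁻ t in s, gammaPDF a r t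
      = (∫⁻ t in s ∩ Ioi 0, gammaPDF a r t) + ∫⁻ t in s \ Ioi 0, gammaPDF a r t :=
    (lintegral_inter_add_diff _ _ measurableSet_Ioi).symm
  have h3 : ∫⁻ t in s \ Ioi 0, gammaPDF a r t = 0 := by
    have hsub : s \ Ioi 0 ⊆ Iic 0 := fun t ht => mem_Iic.mpr (le_of_not_gt fun h => ht.2 h)
    refine le_antisymm (le_trans (lintegral_mono_set hsub) ?_) (zero_le)
    rw [show volume.restrict (Iic (0:ℝ)) = volume.restrict (Iio (0:ℝ)) from
      Measure.restrict_congr_set (Iio_ae_eq_Iic).symm]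
    rw [lintegral_gammaPDF_of_nonpos le_rfl]
  rw [h2, h3, add_zero, inter_comm]

/-- The numerical identity between the normalizing constants. -/
theorem mahalanobis_aux_const_key {p : ℕ} (hp : 0 < p) :
    (2 * π) ^ (-(p:ℝ)/2) * ((p:ℝ) * (√π ^ p / Gamma ((p:ℝ)/2 + 1))) / 2
      = (1/2 : ℝ) ^ ((p:ℝ)/2) / Gamma ((p:ℝ)/2) := by
  have hp0 : (0:ℝ) < p := Nat.cast_pos.2 hp
  have hΓ : Gamma ((p:ℝ)/2 + 1) = ((p:ℝ)/2) * Gamma ((p:ℝ)/2) :=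
    Real.Gamma_add_one (by positivity)
  have hΓ0 : 0 < Gamma ((p:ℝ)/2) := Real.Gamma_pos_of_pos (by positivity)
  have hπ : √π ^ p = π ^ ((p:ℝ)/2) := by
    rw [Real.sqrt_eq_rpow, ← Real.rpow_natCast (π ^ ((1:ℝ)/2)) p,
      ← Real.rpow_mul pi_pos.le]
    congr 1; ring
  have h2π : (2 * π) ^ (-(p:ℝ)/2) = 2 ^ (-(p:ℝ)/2) * π ^ (-(p:ℝ)/2) :=
    Real.mul_rpow (by norm_num) pi_pos.le
  have hπneg : π ^ (-(p:ℝ)/2) = (π ^ ((p:ℝ)/2))⁻¹ := by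
    rw [neg_div, Real.rpow_neg pi_pos.le]
  have h12 : (1/2 : ℝ) ^ ((p:ℝ)/2) = ((2:ℝ) ^ ((p:ℝ)/2))⁻¹ := by
    rw [one_div, Real.inv_rpow (by norm_num)]
  have h2neg : (2:ℝ) ^ (-(p:ℝ)/2) = ((2:ℝ) ^ ((p:ℝ)/2))⁻¹ := by
    rw [neg_div, Real.rpow_neg (by norm_num)]
  have hπ0 : (0:ℝ) < π ^ ((p:ℝ)/2) := Real.rpow_pos_of_pos pi_pos _
  rw [h2π, hπ, hΓ, hπneg, h12, h2neg]
  field_simp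

/-- The indicator-weighted radial density appearing in the proof. -/
noncomputable def mahalanobisGInd (s : Set ℝ) : ℝ → ℝ≥0∞ := fun t =>
  s.indicator (fun _ => (1:ℝ≥0∞)) t * ENNReal.ofReal (Real.exp (-(1/2 * t)))

theorem mahalanobis_measurable_gInd {s : Set ℝ} (hs : MeasurableSet s) :
    Measurable (mahalanobisGInd s) := by
  unfold mahalanobisGInd
  exact (measurable_const.indicator hs).mul (by fun_prop)

end Aux

/-- **Proposition 1.** If `X ~ N(μ, Σ)` with `Σ` symmetric positive definite, then the
Mahalanobis distance statistic `d = (X − μ)ᵀ Σ⁻¹ (X − μ)` is chi-squared distributed with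
`p` degrees of freedom, i.e. Gamma with shape `p/2` and rate `1/2`. -/
theorem mahalanobis_chiSq {p : ℕ} (hp : 0 < p) (μ : Fin p → ℝ)
    (S : Matrix (Fin p) (Fin p) ℝ) (hSymm : S.IsSymm) (hPD : S.PosDef)
    {Ω : Type*} [MeasurableSpace Ω] (P : Measure Ω) [IsProbabilityMeasure P]
    (X : Ω → (Fin p → ℝ)) (hX : Measurable X) (hlaw : P.map X = mvGaussian μ S) :
    P.map (fun ω => (X ω - μ) ⬝ᵥ S⁻¹.mulVec (X ω - μ)) =
      gammaMeasure (p / 2 : ℝ) (1 / 2 : ℝ) := by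
  classical
  -- measurability of the Mahalanobis statistic
  have hsub : Measurable fun x : Fin p → ℝ => x - μ := by fun_prop
  have hdotm : Measurable fun v : Fin p → ℝ => v ⬝ᵥ S⁻¹.mulVec v := by
    have h : Measurable fun v : Fin p → ℝ => ∑ i, v i * (S⁻¹.mulVec v) i :=
      Finset.measurable_sum _ fun i _ => (measurable_pi_apply i).mul
        ((measurable_pi_apply i).comp (mahalanobis_aux_measurable_mulVec S⁻¹))
    exact h
  have hq : Measurable fun x : Fin p → ℝ => (x - μ) ⬝ᵥ S⁻¹.mulVec (x - μ) := hdotm.comp hsub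
  have h0 : P.map (fun ω => (X ω - μ) ⬝ᵥ S⁻¹.mulVec (X ω - μ))
      = (mvGaussian μ S).map (fun x => (x - μ) ⬝ᵥ S⁻¹.mulVec (x - μ)) := by
    rw [← hlaw, Measure.map_map hq hX]; rfl
  rw [h0]
  -- matrix square root
  have hPSD := hPD.posSemidef
  set T := CFC.sqrt S with hTdef
  have hTT : T * T = S := CFC.sqrt_mul_sqrt_self S hPSD.nonneg
  have hTsymm : Tᵀ = T := (CFC.sqrt_nonneg S).posSemidef.1
  have hdetS : 0 < S.det := hPD.det_pos
  have hdet2 : T.det * T.det = S.det := by rw [← Matrix.det_mul, hTT]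
  have hTdet0 : T.det ≠ 0 := by
    intro h; rw [h, mul_zero] at hdet2; exact hdetS.ne hdet2
  have hu : IsUnit T.det := isUnit_iff_ne_zero.mpr hTdet0
  have hone : T * (S⁻¹ * T) = 1 := by
    rw [← hTT, Matrix.mul_inv_rev, Matrix.mul_assoc T⁻¹ T⁻¹ T,
      Matrix.nonsing_inv_mul T hu, Matrix.mul_one, Matrix.mul_nonsing_inv T hu]
  have hqT : ∀ y : Fin p → ℝ,
      (μ + T.mulVec y - μ) ⬝ᵥ S⁻¹.mulVec (μ + T.mulVec y - μ) = y ⬝ᵥ y := by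
    intro y
    have hmv := Matrix.mulVec_transpose T y
    rw [hTsymm] at hmv
    rw [add_sub_cancel_left, Matrix.mulVec_mulVec, Matrix.dotProduct_mulVec, hmv,
      Matrix.vecMul_vecMul, hone, Matrix.vecMul_one]
  -- constants
  set c₁ : ℝ := (2 * Real.pi) ^ (-(p : ℝ) / 2) with hc₁
  set c₂ : ℝ := S.det ^ (-(1 : ℝ) / 2) with hc₂
  have hc₁0 : 0 < c₁ := Real.rpow_pos_of_pos (by positivity) _
  have hc₂0 : 0 ≤ c₂ := Real.rpow_nonneg hdetS.le _
  have habs : |T.det| * |T.det| = S.det := by rw [← abs_mul, hdet2, abs_of_pos hdetS]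
  have hc₂T : c₂ * |T.det| = 1 := by
    have h : c₂ = |T.det|⁻¹ := by
      rw [hc₂, ← habs, ← sq, ← Real.rpow_natCast |T.det| 2,
        ← Real.rpow_mul (abs_nonneg _)]
      norm_num [Real.rpow_neg_one]
    rw [h, inv_mul_cancel₀ (abs_ne_zero.mpr hTdet0)]
  have hcancel : ENNReal.ofReal |T.det| * ENNReal.ofReal |T.det⁻¹| = 1 := by
    rw [← ENNReal.ofReal_mul (abs_nonneg _), abs_inv,
      mul_inv_cancel₀ (abs_ne_zero.mpr hTdet0), ENNReal.ofReal_one]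
  haveI : Nonempty (Fin p) := ⟨⟨0, hp⟩⟩
  have hV : volume (Metric.ball (0 : EuclideanSpace ℝ (Fin p)) 1)
      = ENNReal.ofReal (Real.sqrt Real.pi ^ p / Real.Gamma ((p:ℝ)/2 + 1)) := by
    rw [EuclideanSpace.volume_ball]
    simp [Fintype.card_fin]
  -- main computation
  ext s hs
  rw [Measure.map_apply hq hs]
  unfold mvGaussian
  rw [withDensity_apply _ (hq hs)]
  have hA : (∫⁻ x in (fun x : Fin p → ℝ => (x - μ) ⬝ᵥ S⁻¹.mulVec (x - μ)) ⁻¹' s,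
        ENNReal.ofReal (c₁ * c₂ * Real.exp (-(1/2) * ((x - μ) ⬝ᵥ S⁻¹.mulVec (x - μ)))))
      = ENNReal.ofReal (c₁ * c₂) *
          ∫⁻ x : Fin p → ℝ, mahalanobisGInd s ((x - μ) ⬝ᵥ S⁻¹.mulVec (x - μ)) := by
    rw [← lintegral_indicator (hq hs), ← lintegral_const_mul' _ _ ENNReal.ofReal_ne_top]
    refine lintegral_congr fun x => ?_
    rw [Set.indicator_apply]
    split_ifs with hmem
    · have hmem' : ((x - μ) ⬝ᵥ S⁻¹.mulVec (x - μ)) ∈ s := hmem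
      simp only [mahalanobisGInd]
      rw [Set.indicator_of_mem hmem', one_mul,
        ← ENNReal.ofReal_mul (mul_nonneg hc₁0.le hc₂0)]
      congr 1
      rw [neg_mul]
    · have hmem' : ((x - μ) ⬝ᵥ S⁻¹.mulVec (x - μ)) ∉ s := hmem
      simp only [mahalanobisGInd]
      rw [Set.indicator_of_notMem hmem', zero_mul, mul_zero]
  rw [hA]
  -- change of variables x = μ + T y
  have hgm := mahalanobis_measurable_gInd (s := s) hs
  have hCD : (∫⁻ x : Fin p → ℝ, mahalanobisGInd s ((x - μ) ⬝ᵥ S⁻¹.mulVec (x - μ)))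
      = ENNReal.ofReal |T.det| * ∫⁻ y : Fin p → ℝ, mahalanobisGInd s (y ⬝ᵥ y) := by
    have hL : Measurable fun y : Fin p → ℝ => μ + T.mulVec y :=
      (mahalanobis_aux_measurable_mulVec T).const_add μ
    have h1 : (∫⁻ y : Fin p → ℝ,
          mahalanobisGInd s ((μ + T.mulVec y - μ) ⬝ᵥ S⁻¹.mulVec (μ + T.mulVec y - μ)))
        = ∫⁻ x, mahalanobisGInd s ((x - μ) ⬝ᵥ S⁻¹.mulVec (x - μ))
            ∂(Measure.map (fun y : Fin p → ℝ => μ + T.mulVec y) volume) :=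
      (lintegral_map (hgm.comp hq) hL).symm
    rw [mahalanobis_aux_map_affine μ T hTdet0, lintegral_smul_measure, smul_eq_mul] at h1
    have h2 : (∫⁻ y : Fin p → ℝ,
          mahalanobisGInd s ((μ + T.mulVec y - μ) ⬝ᵥ S⁻¹.mulVec (μ + T.mulVec y - μ)))
        = ∫⁻ y : Fin p → ℝ, mahalanobisGInd s (y ⬝ᵥ y) :=
      lintegral_congr fun y => by rw [hqT y]
    rw [h2] at h1
    rw [h1, ← mul_assoc, hcancel, one_mul]
  rw [hCD, mahalanobis_aux_lintegral_dot hp (mahalanobisGInd s) hgm,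
    mahalanobis_aux_subst hp (mahalanobisGInd s), hV,
    mahalanobis_aux_gammaMeasure_apply hs]
  -- collapse the constants
  have hconst : ∀ I : ℝ≥0∞, ENNReal.ofReal (c₁ * c₂) * (ENNReal.ofReal |T.det| *
        (((p:ℝ≥0∞) * ENNReal.ofReal (Real.sqrt Real.pi ^ p / Real.Gamma ((p:ℝ)/2 + 1))) * I))
      = ENNReal.ofReal (c₁ * ((p:ℝ) * (Real.sqrt Real.pi ^ p / Real.Gamma ((p:ℝ)/2 + 1)))) * I := by
    intro I
    rw [show ENNReal.ofReal (c₁ * c₂) * (ENNReal.ofReal |T.det| *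
        (((p:ℝ≥0∞) * ENNReal.ofReal (Real.sqrt Real.pi ^ p / Real.Gamma ((p:ℝ)/2 + 1))) * I))
      = (ENNReal.ofReal (c₁ * c₂) * ENNReal.ofReal |T.det|) *
        (((p:ℝ≥0∞) * ENNReal.ofReal (Real.sqrt Real.pi ^ p / Real.Gamma ((p:ℝ)/2 + 1))) * I)
      from by ring]
    rw [← ENNReal.ofReal_mul (mul_nonneg hc₁0.le hc₂0), mul_assoc c₁ c₂ _, hc₂T, mul_one,
      ← ENNReal.ofReal_natCast p, ← ENNReal.ofReal_mul (by positivity), ← mul_assoc,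
      ← ENNReal.ofReal_mul hc₁0.le]
  rw [hconst, ← lintegral_const_mul' _ _ ENNReal.ofReal_ne_top]
  -- pointwise identification of the densities
  refine setLIntegral_congr_fun measurableSet_Ioi (fun t ht => ?_)
  simp only [Set.mem_Ioi] at ht
  simp only [mahalanobisGInd]
  have hK0 : (0:ℝ) ≤ c₁ * ((p:ℝ) * (Real.sqrt Real.pi ^ p / Real.Gamma ((p:ℝ)/2 + 1))) := by
    have hΓ1 := Real.Gamma_pos_of_pos (show (0:ℝ) < (p:ℝ)/2 + 1 by positivity)
    have := hc₁0.le
    positivity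
  by_cases hts : t ∈ s
  · rw [Set.indicator_of_mem hts, one_mul, one_mul]
    rw [gammaPDF_of_nonneg ht.le, ← ENNReal.ofReal_mul (by positivity),
      ← ENNReal.ofReal_mul hK0]
    congr 1
    have hkey := mahalanobis_aux_const_key hp
    rw [hc₁, ← hkey]
    ring
  · rw [Set.indicator_of_notMem hts, zero_mul, zero_mul, mul_zero, mul_zero]
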